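/- The generalized Taylor operator commutes with differentiation in the first $p$ orders: for $f \in C^d(\mathbb{R})$ and $j = 0,\dots,p$, the $j$-th derivative with respect to $h$ satisfies $\frac{\partial^j}{\partial h^j} T_{p,\Lambda} f(x,h) = T_{p-j,\Lambda} f^{(j)}(x,h)$, where the right side is the generalized Taylor operator of order $p-j$ (with the same frequencies $\Lambda$) applied to $f^{(j)}$. -/

import Mathlib

open scoped Matrix

/-- The confluent Vandermonde matrix `V_d` (`d = p + r`): columns `0,…,p` are
`j! e_j`, columns `p+1,…,d` are `[λ_k^i]_{i=0}^d`. -/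
noncomputable def Vand (p r : ℕ) (l : Fin r → ℝ) :
    Matrix (Fin (p + r + 1)) (Fin (p + r + 1)) ℝ :=
  Matrix.of fun i c =>
    if hc : (c : ℕ) ≤ p then (if (i : ℕ) = (c : ℕ) then ((c : ℕ).factorial : ℝ) else 0)
    else l ⟨(c : ℕ) - (p + 1), by have := c.isLt; omega⟩ ^ (i : ℕ)

/-- The row vector `[1, h, …, h^p, e^{λ_1 h}, …, e^{λ_r h}]`. -/
noncomputable def expBasis (p r : ℕ) (l : Fin r → ℝ) (h : ℝ) : Fin (p + r + 1) → ℝ :=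
  fun c =>
    if hc : (c : ℕ) ≤ p then h ^ (c : ℕ)
    else Real.exp (l ⟨(c : ℕ) - (p + 1), by have := c.isLt; omega⟩ * h)

/-- The vector of derivatives `v_f(x) = [f^(j)(x)]_{j=0}^d`. -/
noncomputable def vder (d : ℕ) (f : ℝ → ℝ) (x : ℝ) : Fin (d + 1) → ℝ :=
  fun i => iteratedDeriv (i : ℕ) f x

/-- The generalized Taylor expansion
`T_{p,Λ} f (x,h) = [1,…,h^p,e^{λ_1 h},…,e^{λ_r h}] V_d⁻¹ v_f(x)`. -/
noncomputable def Tgen (p r : ℕ) (l : Fin r → ℝ) (f : ℝ → ℝ) (x h : ℝ) : ℝ :=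
  expBasis p r l h ⬝ᵥ ((Vand p r l)⁻¹ *ᵥ vder (p + r) f x)

/-- The classical Taylor polynomial `T_d f (x,h) = ∑_{j=0}^d f^(j)(x) h^j / j!`. -/
noncomputable def Tcl (d : ℕ) (f : ℝ → ℝ) (x h : ℝ) : ℝ :=
  ∑ j ∈ Finset.range (d + 1), iteratedDeriv j f x / (Nat.factorial j : ℝ) * h ^ j

/-- The Euclidean norm on `Fin n → ℝ`. -/
noncomputable def enorm2 (n : ℕ) (v : Fin n → ℝ) : ℝ := Real.sqrt (∑ i, v i ^ 2)


section Aux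

lemma itd_sum {ι : Type*} (s : Finset ι) (F : ι → ℝ → ℝ)
    (hF : ∀ i ∈ s, ContDiff ℝ ⊤ (F i)) (n : ℕ) :
    iteratedDeriv n (fun t => ∑ i ∈ s, F i t) = fun t => ∑ i ∈ s, iteratedDeriv n (F i) t := by
  induction n with
  | zero => simp
  | succ n ih =>
    rw [iteratedDeriv_succ, ih]
    funext t
    rw [deriv_fun_sum fun i hi =>
      ((hF i hi).differentiable_iteratedDeriv n (by simp)).differentiableAt]
    exact Finset.sum_congr rfl fun i _ => congrFun (iteratedDeriv_succ ..).symm t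

lemma itd_mul_const (n : ℕ) (g : ℝ → ℝ) (hg : ContDiff ℝ ⊤ g) (C : ℝ) :
    iteratedDeriv n (fun t => g t * C) = fun t => iteratedDeriv n g t * C := by
  induction n with
  | zero => simp
  | succ n ih =>
    rw [iteratedDeriv_succ, ih]
    funext t
    rw [deriv_mul_const ((hg.differentiable_iteratedDeriv n (by simp)).differentiableAt),
      iteratedDeriv_succ]

lemma itd_pow (c n : ℕ) :
    iteratedDeriv n (fun s : ℝ => s ^ c) = fun t => (c.descFactorial n : ℝ) * t ^ (c - n) := by
  induction n with
  | zero => simp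
  | succ n ih =>
    rw [iteratedDeriv_succ, ih]
    funext t
    rw [deriv_const_mul _ (differentiable_pow _).differentiableAt, deriv_pow_field,
      Nat.descFactorial_succ]
    push_cast
    rw [show c - n - 1 = c - (n + 1) by omega]
    ring

lemma itd_itd (i j : ℕ) (f : ℝ → ℝ) :
    iteratedDeriv i (iteratedDeriv j f) = iteratedDeriv (i + j) f := by
  induction i with
  | zero => simp
  | succ i ih =>
    rw [iteratedDeriv_succ, ih, show i + 1 + j = (i + j) + 1 by omega, iteratedDeriv_succ]

lemma sum_split (p r : ℕ) (F : Fin (p + r + 1) → ℝ) :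
    ∑ c, F c = (∑ c : Fin (p + 1), F ⟨c, by omega⟩) + ∑ k : Fin r, F ⟨p + 1 + k, by omega⟩ := by
  rw [← (finCongr (by omega : (p + 1) + r = p + r + 1)).sum_comp F, Fin.sum_univ_add]
  congr 1 <;> refine Finset.sum_congr rfl fun c _ => ?_ <;> congr 1 <;> ext <;> simp

lemma vand_det_ne_zero (p r : ℕ) (l : Fin r → ℝ) (h0 : ∀ k, l k ≠ 0)
    (hinj : Function.Injective l) : (Vand p r l).det ≠ 0 := by
  intro hdet
  obtain ⟨a, ha0, ha⟩ := (Matrix.exists_mulVec_eq_zero_iff).2 hdet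
  have key : ∀ i : Fin (p + r + 1),
      (if (i : ℕ) ≤ p then ((i : ℕ).factorial : ℝ) * a i else 0)
        + ∑ k : Fin r, l k ^ (i : ℕ) * a ⟨p + 1 + k, by omega⟩ = 0 := by
    intro i
    have hrow := congrFun ha i
    simp only [Pi.zero_apply] at hrow
    rw [Matrix.mulVec, dotProduct,
      sum_split p r (fun c => Vand p r l i c * a c)] at hrow
    have h1 : (∑ c : Fin (p + 1), Vand p r l i ⟨c, by omega⟩ * a ⟨c, by omega⟩)
        = if (i : ℕ) ≤ p then ((i : ℕ).factorial : ℝ) * a i else 0 := by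
      by_cases hi : (i : ℕ) ≤ p
      · rw [if_pos hi]
        rw [Finset.sum_eq_single (⟨(i : ℕ), by omega⟩ : Fin (p + 1))]
        · simp only [Vand, Matrix.of_apply]
          rw [dif_pos (by simpa using hi)]
          simp only [if_true]
        · intro c _ hc
          simp only [Vand, Matrix.of_apply]
          rw [dif_pos (by exact Nat.lt_succ_iff.mp c.isLt)]
          rw [if_neg (fun hh => hc (Fin.ext hh.symm)), zero_mul]
        · simp
      · rw [if_neg hi]
        refine Finset.sum_eq_zero fun c _ => ?_
        simp only [Vand, Matrix.of_apply]
        rw [dif_pos (by exact Nat.lt_succ_iff.mp c.isLt)]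
        rw [if_neg (by omega), zero_mul]
    have h2 : ∀ k : Fin r, Vand p r l i ⟨p + 1 + k, by omega⟩ = l k ^ (i : ℕ) := by
      intro k
      simp only [Vand, Matrix.of_apply]
      rw [dif_neg (by omega)]
      congr 2
      exact Fin.ext (by simp)
    rw [h1] at hrow
    simp only [h2] at hrow
    exact hrow
  have hb : ∀ k : Fin r, a ⟨p + 1 + k, by omega⟩ = 0 := by
    have hvd : ((Matrix.vandermonde l)ᵀ).det ≠ 0 := by
      rw [Matrix.det_transpose]
      exact Matrix.det_vandermonde_ne_zero_iff.mpr hinj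
    have hmv : (Matrix.vandermonde l)ᵀ *ᵥ
        (fun k : Fin r => l k ^ (p + 1) * a ⟨p + 1 + k, by omega⟩) = 0 := by
      funext m
      simp only [Pi.zero_apply]
      have := key ⟨p + 1 + m, by omega⟩
      rw [if_neg (by simp; omega), zero_add] at this
      rw [Matrix.mulVec, dotProduct, ← this]
      refine Finset.sum_congr rfl fun k _ => ?_
      simp only [Matrix.transpose_apply, Matrix.vandermonde_apply]
      show l k ^ (m : ℕ) * (l k ^ (p + 1) * a ⟨p + 1 + k, by omega⟩)
          = l k ^ (p + 1 + (m : ℕ)) * a ⟨p + 1 + k, by omega⟩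
      rw [pow_add]; ring
    have := Matrix.eq_zero_of_mulVec_eq_zero hvd hmv
    intro k
    have hk := congrFun this k
    simp only [Pi.zero_apply] at hk
    exact (mul_eq_zero.mp hk).resolve_left (pow_ne_zero _ (h0 k))
  apply ha0
  funext c
  by_cases hc : (c : ℕ) ≤ p
  · have := key c
    rw [if_pos hc] at this
    rw [Finset.sum_eq_zero (fun k _ => by rw [hb k, mul_zero]), add_zero] at this
    have hfac : ((c : ℕ).factorial : ℝ) ≠ 0 := Nat.cast_ne_zero.mpr (Nat.factorial_ne_zero _)
    simpa [hfac] using this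
  · have hk : c = ⟨p + 1 + ((c : ℕ) - (p + 1)), by omega⟩ := Fin.ext (by simp; omega)
    rw [hk]
    exact hb ⟨(c : ℕ) - (p + 1), by have := c.isLt; omega⟩

/-- The matrix expressing `j`-fold `h`-differentiation on the exponential basis. -/
noncomputable def Bmat (p r j : ℕ) (l : Fin r → ℝ) :
    Matrix (Fin (p - j + r + 1)) (Fin (p + r + 1)) ℝ :=
  Matrix.of fun i c =>
    if (i : ℕ) = (c : ℕ) - j then
      (if hc : (c : ℕ) ≤ p then (((c : ℕ).descFactorial j : ℕ) : ℝ)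
       else l ⟨(c : ℕ) - (p + 1), by have := c.isLt; omega⟩ ^ j)
    else 0

/-- The shift matrix selecting derivatives `j,…,d`. -/
def Smat (p r j : ℕ) : Matrix (Fin (p - j + r + 1)) (Fin (p + r + 1)) ℝ :=
  Matrix.of fun i c => if (c : ℕ) = (i : ℕ) + j then 1 else 0

lemma WB_eq_SV (p r j : ℕ) (hj : j ≤ p) (l : Fin r → ℝ) :
    Vand (p - j) r l * Bmat p r j l = Smat p r j * Vand p r l := by
  ext i c
  have hic : (i : ℕ) + j < p + r + 1 := by have := i.isLt; omega
  have hcj : (c : ℕ) - j < p - j + r + 1 := by have := c.isLt; omega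
  have e1 : (Vand (p - j) r l * Bmat p r j l) i c
      = Vand (p - j) r l i ⟨(c : ℕ) - j, hcj⟩ * Bmat p r j l ⟨(c : ℕ) - j, hcj⟩ c := by
    rw [Matrix.mul_apply]
    refine Finset.sum_eq_single _ (fun m _ hm => ?_) (by simp)
    have hne : (m : ℕ) ≠ (c : ℕ) - j := fun hh => hm (Fin.ext hh)
    simp only [Bmat, Matrix.of_apply, if_neg hne, mul_zero]
  have e2 : (Smat p r j * Vand p r l) i c = Vand p r l ⟨(i : ℕ) + j, hic⟩ c := by
    rw [Matrix.mul_apply]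
    have := Finset.sum_eq_single (s := Finset.univ) (⟨(i : ℕ) + j, hic⟩ : Fin (p + r + 1))
      (f := fun m => Smat p r j i m * Vand p r l m c)
      (fun m _ hm => by
        have hne : (m : ℕ) ≠ (i : ℕ) + j := fun hh => hm (Fin.ext hh)
        simp only [Smat, Matrix.of_apply, if_neg hne, zero_mul])
      (by simp)
    rw [this]
    simp only [Smat, Matrix.of_apply, if_true, one_mul]
  rw [e1, e2]
  by_cases hc : (c : ℕ) ≤ p
  · by_cases hjc : j ≤ (c : ℕ)
    · simp only [Vand, Bmat, Matrix.of_apply, if_true]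
      rw [dif_pos (show (c : ℕ) - j ≤ p - j by omega), dif_pos hc, dif_pos hc]
      by_cases hi : (i : ℕ) = (c : ℕ) - j
      · rw [if_pos hi, if_pos (show (i : ℕ) + j = (c : ℕ) by omega),
          ← Nat.cast_mul, Nat.factorial_mul_descFactorial hjc]
      · rw [if_neg hi, if_neg (show ¬ (i : ℕ) + j = (c : ℕ) by omega), zero_mul]
    · simp only [Vand, Bmat, Matrix.of_apply, if_true]
      rw [dif_pos hc, dif_pos (show (c : ℕ) - j ≤ p - j by omega),
        if_neg (show ¬ (i : ℕ) + j = (c : ℕ) by omega),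
        show ((c : ℕ).descFactorial j : ℝ) = 0 from by
          norm_cast; exact Nat.descFactorial_eq_zero_iff_lt.mpr (by omega),
        mul_zero, dif_pos hc]
  · simp only [Vand, Bmat, Matrix.of_apply, if_true]
    rw [dif_neg hc, dif_neg hc,
      dif_neg (show ¬ (c : ℕ) - j ≤ p - j by omega)]
    have hidx : (⟨(c : ℕ) - j - (p - j + 1), by have := c.isLt; omega⟩ : Fin r)
        = ⟨(c : ℕ) - (p + 1), by have := c.isLt; omega⟩ := Fin.ext (by simp; omega)
    rw [hidx, pow_add]

lemma expBasis_smooth (p r : ℕ) (l : Fin r → ℝ) (c : Fin (p + r + 1)) :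
    ContDiff ℝ ⊤ (fun t => expBasis p r l t c) := by
  by_cases hc : (c : ℕ) ≤ p
  · have : (fun t : ℝ => expBasis p r l t c) = fun t => t ^ (c : ℕ) := by
      funext t; simp [expBasis, hc]
    rw [this]; exact contDiff_id.pow _
  · have : (fun t : ℝ => expBasis p r l t c)
        = fun t => Real.exp (l ⟨(c : ℕ) - (p + 1), by have := c.isLt; omega⟩ * t) := by
      funext t; simp [expBasis, hc]
    rw [this]; exact Real.contDiff_exp.comp (contDiff_const.mul contDiff_id)

lemma itd_expBasis (p r j : ℕ) (hj : j ≤ p) (hr : 1 ≤ r) (l : Fin r → ℝ) (h : ℝ)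
    (c : Fin (p + r + 1)) :
    iteratedDeriv j (fun t => expBasis p r l t c) h
      = ∑ i, expBasis (p - j) r l h i * Bmat p r j l i c := by
  have hcj : (c : ℕ) - j < p - j + r + 1 := by have := c.isLt; omega
  have hsingle : ∑ i, expBasis (p - j) r l h i * Bmat p r j l i c
      = expBasis (p - j) r l h ⟨(c : ℕ) - j, hcj⟩
        * Bmat p r j l ⟨(c : ℕ) - j, hcj⟩ c := by
    refine Finset.sum_eq_single _ (fun m _ hm => ?_) (by simp)
    have hne : (m : ℕ) ≠ (c : ℕ) - j := fun hh => hm (Fin.ext hh)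
    simp only [Bmat, Matrix.of_apply, if_neg hne, mul_zero]
  rw [hsingle]
  by_cases hc : (c : ℕ) ≤ p
  · have hfun : (fun t : ℝ => expBasis p r l t c) = fun t => t ^ (c : ℕ) := by
      funext t; simp [expBasis, hc]
    rw [hfun, itd_pow]
    simp only [expBasis, Bmat, Matrix.of_apply, if_true]
    rw [dif_pos (show (c : ℕ) - j ≤ p - j by omega), dif_pos hc]
    ring
  · have hfun : (fun t : ℝ => expBasis p r l t c)
        = fun t => Real.exp (l ⟨(c : ℕ) - (p + 1), by have := c.isLt; omega⟩ * t) := by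
      funext t; simp [expBasis, hc]
    rw [hfun, congrFun (iteratedDeriv_exp_const_mul j _) h]
    simp only [expBasis, Bmat, Matrix.of_apply, if_true]
    rw [dif_neg (show ¬ (c : ℕ) - j ≤ p - j by omega), dif_neg hc]
    have hidx : (⟨(c : ℕ) - j - (p - j + 1), by have := c.isLt; omega⟩ : Fin r)
        = ⟨(c : ℕ) - (p + 1), by have := c.isLt; omega⟩ := Fin.ext (by simp; omega)
    rw [hidx]
    ring

lemma smat_vder (p r j : ℕ) (hj : j ≤ p) (f : ℝ → ℝ) (x : ℝ) :
    Smat p r j *ᵥ vder (p + r) f x = vder (p - j + r) (iteratedDeriv j f) x := by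
  funext i
  have hic : (i : ℕ) + j < p + r + 1 := by have := i.isLt; omega
  rw [Matrix.mulVec, dotProduct]
  have := Finset.sum_eq_single (s := Finset.univ) (⟨(i : ℕ) + j, hic⟩ : Fin (p + r + 1))
    (f := fun c => Smat p r j i c * vder (p + r) f x c)
    (fun c _ hc => by
      have hne : (c : ℕ) ≠ (i : ℕ) + j := fun hh => hc (Fin.ext hh)
      simp only [Smat, Matrix.of_apply, if_neg hne, zero_mul])
    (by simp)
  rw [this]
  simp only [Smat, Matrix.of_apply, if_true, one_mul, vder]
  exact (congrFun (itd_itd (i : ℕ) j f) x).symm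

end Aux

/-- for `j = 0,…,p` the generalized Taylor operator commutes with
differentiation: `∂_h^j T_{p,Λ} f (x,h) = T_{p-j,Λ} f^(j) (x,h)`. -/
theorem tgen_deriv_commute (p r : ℕ) (hr : 1 ≤ r) (l : Fin r → ℝ)
    (h0 : ∀ k, l k ≠ 0) (hinj : Function.Injective l)
    (f : ℝ → ℝ) (hf : ContDiff ℝ (p + r : ℕ) f)
    (j : ℕ) (hj : j ≤ p) (x h : ℝ) :
    iteratedDeriv j (fun t => Tgen p r l f x t) h =
      Tgen (p - j) r l (iteratedDeriv j f) x h := by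
  classical
  have hV : IsUnit (Vand p r l).det :=
    isUnit_iff_ne_zero.mpr (vand_det_ne_zero p r l h0 hinj)
  have hW : IsUnit (Vand (p - j) r l).det :=
    isUnit_iff_ne_zero.mpr (vand_det_ne_zero (p - j) r l h0 hinj)
  have hBV : Bmat p r j l * (Vand p r l)⁻¹ = (Vand (p - j) r l)⁻¹ * Smat p r j := by
    have h1 : (Vand (p - j) r l)⁻¹ * (Vand (p - j) r l * Bmat p r j l) * (Vand p r l)⁻¹
        = Bmat p r j l * (Vand p r l)⁻¹ := by
      rw [← Matrix.mul_assoc, Matrix.nonsing_inv_mul _ hW, Matrix.one_mul]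
    have h2 : (Vand (p - j) r l)⁻¹ * (Smat p r j * Vand p r l) * (Vand p r l)⁻¹
        = (Vand (p - j) r l)⁻¹ * Smat p r j := by
      rw [Matrix.mul_assoc ((Vand (p - j) r l)⁻¹), Matrix.mul_assoc,
        Matrix.mul_nonsing_inv _ hV, Matrix.mul_one]
    rw [← h1, WB_eq_SV p r j hj l, h2]
  set w : Fin (p + r + 1) → ℝ := (Vand p r l)⁻¹ *ᵥ vder (p + r) f x with hwdef
  have hfun : (fun t => Tgen p r l f x t) = fun t => ∑ c, expBasis p r l t c * w c := by
    funext t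
    simp only [Tgen, dotProduct, hwdef]
  rw [hfun]
  rw [congrFun (itd_sum Finset.univ (fun c t => expBasis p r l t c * w c)
    (fun c _ => (expBasis_smooth p r l c).mul contDiff_const) j) h]
  have hterm : ∀ c : Fin (p + r + 1),
      iteratedDeriv j (fun t => expBasis p r l t c * w c) h
        = (∑ i, expBasis (p - j) r l h i * Bmat p r j l i c) * w c := by
    intro c
    rw [congrFun (itd_mul_const j _ (expBasis_smooth p r l c) (w c)) h,
      itd_expBasis p r j hj hr l h c]
  rw [Finset.sum_congr rfl fun c _ => hterm c]
  have hswap : ∑ c, (∑ i, expBasis (p - j) r l h i * Bmat p r j l i c) * w c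
      = expBasis (p - j) r l h ⬝ᵥ (Bmat p r j l *ᵥ w) := by
    simp only [dotProduct, Matrix.mulVec, Finset.sum_mul, Finset.mul_sum]
    rw [Finset.sum_comm]
    exact Finset.sum_congr rfl fun i _ => Finset.sum_congr rfl fun c _ => by ring
  rw [hswap, hwdef, Matrix.mulVec_mulVec, hBV, ← Matrix.mulVec_mulVec,
    smat_vder p r j hj f x]
  rfl
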